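/- arXiv:2506.18300 — 3 statements merged into one kernel-verified Lean document; each statement's English description precedes it below -/
import Mathlib

section
/- Let G be a locally compact group with an invariant mean m on L^∞(G) that is bi-invariant, and let (π, V) be a finite-dimensional irreducible unitary representation of G. Then for all v₁, v₂, w₁, w₂ ∈ V, m(g ↦ ⟨π(g)v₁, v₂⟩·conj(⟨π(g)w₁, w₂⟩)) = (1/dim V)·⟨v₁, w₁⟩·conj(⟨v₂, w₂⟩). -/
open scoped InnerProductSpace BoundedContinuousFunction

section Aux

variable {G : Type*} [Group G] [TopologicalSpace G] [IsTopologicalGroup G]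
variable {V : Type*} [NormedAddCommGroup V] [InnerProductSpace ℂ V] [FiniteDimensional ℂ V]

/-- The matrix coefficient `g ↦ ⟪w, π g v⟫` as a bounded continuous function. -/
noncomputable def coeffBCF (π : G →* (V ≃ₗᵢ[ℂ] V))
    (hcont : ∀ v w : V, Continuous fun g => (⟪w, (π g) v⟫_ℂ)) (v w : V) : G →ᵇ ℂ :=
  BoundedContinuousFunction.ofNormedAddCommGroup (fun g => ⟪w, (π g) v⟫_ℂ) (hcont v w)
    (‖w‖ * ‖v‖) (fun g => by
      calc ‖⟪w, (π g) v⟫_ℂ‖ ≤ ‖w‖ * ‖(π g) v‖ := norm_inner_le_norm _ _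
        _ = ‖w‖ * ‖v‖ := by rw [(π g).norm_map])

@[simp] lemma coeffBCF_apply (π : G →* (V ≃ₗᵢ[ℂ] V))
    (hcont : ∀ v w : V, Continuous fun g => (⟪w, (π g) v⟫_ℂ)) (v w : V) (g : G) :
    coeffBCF π hcont v w g = ⟪w, (π g) v⟫_ℂ := rfl

/-- The product of a matrix coefficient with the conjugate of another one. -/
noncomputable def Fbcf (π : G →* (V ≃ₗᵢ[ℂ] V))
    (hcont : ∀ v w : V, Continuous fun g => (⟪w, (π g) v⟫_ℂ)) (v₁ v₂ w₁ w₂ : V) : G →ᵇ ℂ :=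
  coeffBCF π hcont v₁ v₂ * star (coeffBCF π hcont w₁ w₂)

@[simp] lemma Fbcf_apply (π : G →* (V ≃ₗᵢ[ℂ] V))
    (hcont : ∀ v w : V, Continuous fun g => (⟪w, (π g) v⟫_ℂ)) (v₁ v₂ w₁ w₂ : V) (g : G) :
    Fbcf π hcont v₁ v₂ w₁ w₂ g
      = ⟪v₂, (π g) v₁⟫_ℂ * (starRingEnd ℂ) ⟪w₂, (π g) w₁⟫_ℂ := by
  simp [Fbcf, Complex.star_def]

lemma Fbcf_add_v₁ (π : G →* (V ≃ₗᵢ[ℂ] V))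
    (hcont : ∀ v w : V, Continuous fun g => (⟪w, (π g) v⟫_ℂ)) (v v' v₂ w₁ w₂ : V) :
    Fbcf π hcont (v + v') v₂ w₁ w₂ = Fbcf π hcont v v₂ w₁ w₂ + Fbcf π hcont v' v₂ w₁ w₂ := by
  ext g
  simp [inner_add_right, add_mul]

lemma Fbcf_smul_v₁ (π : G →* (V ≃ₗᵢ[ℂ] V))
    (hcont : ∀ v w : V, Continuous fun g => (⟪w, (π g) v⟫_ℂ)) (c : ℂ) (v v₂ w₁ w₂ : V) :
    Fbcf π hcont (c • v) v₂ w₁ w₂ = c • Fbcf π hcont v v₂ w₁ w₂ := by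
  ext g
  simp [inner_smul_right]
  ring

lemma Fbcf_add_w₁ (π : G →* (V ≃ₗᵢ[ℂ] V))
    (hcont : ∀ v w : V, Continuous fun g => (⟪w, (π g) v⟫_ℂ)) (v₁ v₂ w w' w₂ : V) :
    Fbcf π hcont v₁ v₂ (w + w') w₂ = Fbcf π hcont v₁ v₂ w w₂ + Fbcf π hcont v₁ v₂ w' w₂ := by
  ext g
  simp [inner_add_right, mul_add]

lemma Fbcf_smul_w₁ (π : G →* (V ≃ₗᵢ[ℂ] V))
    (hcont : ∀ v w : V, Continuous fun g => (⟪w, (π g) v⟫_ℂ)) (c : ℂ) (v₁ v₂ w w₂ : V) :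
    Fbcf π hcont v₁ v₂ (c • w) w₂ = (starRingEnd ℂ c) • Fbcf π hcont v₁ v₂ w w₂ := by
  ext g
  simp [inner_smul_right]
  ring

lemma pi_mul_apply (π : G →* (V ≃ₗᵢ[ℂ] V)) (g h : G) (x : V) :
    (π (g * h)) x = (π g) ((π h) x) := by
  rw [map_mul]; rfl

lemma pi_inv_cancel (π : G →* (V ≃ₗᵢ[ℂ] V)) (h : G) (x : V) :
    (π h) ((π h⁻¹) x) = x := by
  rw [← pi_mul_apply, mul_inv_cancel, map_one]; rfl

/-- Key step: by invariance of the mean and Schur's lemma, the averaged sesquilinear form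
is a scalar multiple of the inner product. -/
lemma exists_scalar
    (m : (G →ᵇ ℂ) →ₗ[ℂ] ℂ)
    (hm_right : ∀ (f f' : G →ᵇ ℂ) (h : G), (∀ g, f' g = f (g * h)) → m f' = m f)
    (π : G →* (V ≃ₗᵢ[ℂ] V))
    (hcont : ∀ v w : V, Continuous fun g => (⟪w, (π g) v⟫_ℂ))
    (hirr : ∀ U : Submodule ℂ V, (∀ g, ∀ v ∈ U, (π g) v ∈ U) → U = ⊥ ∨ U = ⊤)
    [Nontrivial V] (v₂ w₂ : V) :
    ∃ c : ℂ, ∀ v₁ w₁ : V, m (Fbcf π hcont v₁ v₂ w₁ w₂) = c * ⟪w₁, v₁⟫_ℂ := by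
  -- invariance of the averaged form
  have hS : ∀ (h : G) (v₁ w₁ : V),
      m (Fbcf π hcont ((π h) v₁) v₂ ((π h) w₁) w₂) = m (Fbcf π hcont v₁ v₂ w₁ w₂) := by
    intro h v₁ w₁
    apply hm_right _ _ h
    intro g
    simp [pi_mul_apply]
  -- the operator representing the form
  let T : V → V := fun v₁ => (InnerProductSpace.toDual ℂ V).symm
    (LinearMap.toContinuousLinearMap
      { toFun := fun w₁ => (starRingEnd ℂ) (m (Fbcf π hcont v₁ v₂ w₁ w₂)),
        map_add' := by
          intro w w'
          simp [Fbcf_add_w₁]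
        map_smul' := by
          intro c w
          simp [Fbcf_smul_w₁] })
  have hT : ∀ v₁ w₁ : V, ⟪w₁, T v₁⟫_ℂ = m (Fbcf π hcont v₁ v₂ w₁ w₂) := by
    intro v₁ w₁
    have h1 : ⟪T v₁, w₁⟫_ℂ = (starRingEnd ℂ) (m (Fbcf π hcont v₁ v₂ w₁ w₂)) :=
      InnerProductSpace.toDual_symm_apply
    calc ⟪w₁, T v₁⟫_ℂ = (starRingEnd ℂ) ⟪T v₁, w₁⟫_ℂ := (inner_conj_symm _ _).symm
      _ = m (Fbcf π hcont v₁ v₂ w₁ w₂) := by rw [h1, Complex.conj_conj]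
  have hT_comm : ∀ (h : G) (v : V), T ((π h) v) = (π h) (T v) := by
    intro h v
    apply ext_inner_left ℂ
    intro w₁
    rw [hT]
    have := hS h v ((π h⁻¹) w₁)
    rw [pi_inv_cancel] at this
    rw [this, ← hT]
    calc ⟪(π h⁻¹) w₁, T v⟫_ℂ = ⟪(π h) ((π h⁻¹) w₁), (π h) (T v)⟫_ℂ :=
          ((π h).inner_map_map _ _).symm
      _ = ⟪w₁, (π h) (T v)⟫_ℂ := by rw [pi_inv_cancel]
  -- T is linear
  have hT_add : ∀ v v' : V, T (v + v') = T v + T v' := by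
    intro v v'
    apply ext_inner_left ℂ
    intro w₁
    rw [inner_add_right, hT, hT, hT, Fbcf_add_v₁, map_add]
  have hT_smul : ∀ (c : ℂ) (v : V), T (c • v) = c • T v := by
    intro c v
    apply ext_inner_left ℂ
    intro w₁
    rw [inner_smul_right, hT, hT, Fbcf_smul_v₁, map_smul]
    rfl
  let Tlin : Module.End ℂ V := { toFun := T, map_add' := hT_add, map_smul' := hT_smul }
  obtain ⟨c, hc⟩ := Module.End.exists_eigenvalue Tlin
  -- the eigenspace is invariant, hence everything
  have hinv : ∀ g, ∀ v ∈ Tlin.eigenspace c, (π g) v ∈ Tlin.eigenspace c := by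
    intro g v hv
    rw [Module.End.mem_eigenspace_iff] at hv ⊢
    have hv' : T v = c • v := hv
    show T ((π g) v) = c • (π g) v
    rw [hT_comm, hv']
    exact map_smul (π g) c v
  rcases hirr _ hinv with hbot | htop
  · exact absurd hbot hc
  · refine ⟨c, fun v₁ w₁ => ?_⟩
    have hv₁ : T v₁ = c • v₁ := by
      have : v₁ ∈ Tlin.eigenspace c := htop ▸ Submodule.mem_top
      exact Module.End.mem_eigenspace_iff.mp this
    rw [← hT, hv₁, inner_smul_right]

end Aux

/-- Asymptotic Schur orthogonality via a bi-invariant mean: if `m` is a bi-invariant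
mean on `L^∞(G)` (modelled on bounded continuous functions) and `π` is a
finite-dimensional irreducible unitary representation, then the mean of
`g ↦ ⟨π(g)v₁, v₂⟩ ⬝ conj ⟨π(g)w₁, w₂⟩` equals `(1/dim V) ⟨v₁, w₁⟩ conj ⟨v₂, w₂⟩`.
Here `⟨x, y⟩` denotes the inner product linear in the first variable, i.e. `⟪y, x⟫_ℂ`
in Mathlib's convention. -/
theorem mean_matrix_coeff_of_finite_dim_irreducible
    {G : Type*} [Group G] [TopologicalSpace G] [IsTopologicalGroup G]
    [LocallyCompactSpace G]
    (m : (G →ᵇ ℂ) →ₗ[ℂ] ℂ)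
    (hm_one : m 1 = 1)
    (hm_pos : ∀ f : G →ᵇ ℂ, (∀ g, 0 ≤ (f g).re ∧ (f g).im = 0) →
      0 ≤ (m f).re ∧ (m f).im = 0)
    (hm_left : ∀ (f f' : G →ᵇ ℂ) (h : G), (∀ g, f' g = f (h * g)) → m f' = m f)
    (hm_right : ∀ (f f' : G →ᵇ ℂ) (h : G), (∀ g, f' g = f (g * h)) → m f' = m f)
    {V : Type*} [NormedAddCommGroup V] [InnerProductSpace ℂ V] [FiniteDimensional ℂ V]
    (π : G →* (V ≃ₗᵢ[ℂ] V))
    (hcont : ∀ v w : V, Continuous fun g => (⟪w, (π g) v⟫_ℂ))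
    (hirr : ∀ U : Submodule ℂ V, (∀ g, ∀ v ∈ U, (π g) v ∈ U) → U = ⊥ ∨ U = ⊤) :
    ∀ (v₁ v₂ w₁ w₂ : V) (f : G →ᵇ ℂ),
      (∀ g, f g = ⟪v₂, (π g) v₁⟫_ℂ * (starRingEnd ℂ) ⟪w₂, (π g) w₁⟫_ℂ) →
      m f = (1 / (Module.finrank ℂ V : ℂ)) * ⟪w₁, v₁⟫_ℂ
        * (starRingEnd ℂ) ⟪w₂, v₂⟫_ℂ := by
  intro v₁ v₂ w₁ w₂ f hf
  rcases subsingleton_or_nontrivial V with hV | hV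
  · -- trivial case
    have hv : v₂ = 0 := Subsingleton.elim _ _
    have hw : w₁ = 0 := Subsingleton.elim _ _
    have hf0 : f = 0 := by
      ext g
      rw [hf g, hv]
      simp
    rw [hf0, map_zero, hw]
    simp
  · have hfF : f = Fbcf π hcont v₁ v₂ w₁ w₂ := by
      ext g
      rw [hf g, Fbcf_apply]
    obtain ⟨c, hc⟩ := exists_scalar m hm_right π hcont hirr v₂ w₂
    -- compute c via the trace
    set d : ℕ := Module.finrank ℂ V with hd
    have hd0 : (d : ℂ) ≠ 0 := by
      exact_mod_cast Nat.cast_ne_zero.mpr (Module.finrank_pos (R := ℂ) (M := V)).ne'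
    let b := stdOrthonormalBasis ℂ V
    have hsum : (∑ i, Fbcf π hcont (b i) v₂ (b i) w₂) = ⟪v₂, w₂⟫_ℂ • (1 : G →ᵇ ℂ) := by
      ext g
      rw [BoundedContinuousFunction.coe_sum, Finset.sum_apply]
      have : ∀ i, Fbcf π hcont (b i) v₂ (b i) w₂ g
          = ⟪v₂, (b.map (π g)) i⟫_ℂ * ⟪(b.map (π g)) i, w₂⟫_ℂ := by
        intro i
        rw [Fbcf_apply, inner_conj_symm]
        rfl
      simp only [this]
      rw [(b.map (π g)).sum_inner_mul_inner v₂ w₂]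
      simp
    have htrace : c * (d : ℂ) = ⟪v₂, w₂⟫_ℂ := by
      have h1 : m (∑ i, Fbcf π hcont (b i) v₂ (b i) w₂) = ⟪v₂, w₂⟫_ℂ := by
        rw [hsum, map_smul, hm_one, smul_eq_mul, mul_one]
      rw [map_sum] at h1
      simp only [hc] at h1
      have h2 : ∀ i, ⟪b i, b i⟫_ℂ = 1 := by
        intro i
        rw [orthonormal_iff_ite.mp b.orthonormal]
        simp
      simp only [h2, mul_one, Finset.sum_const, Finset.card_univ, Fintype.card_fin,
        nsmul_eq_mul] at h1
      rw [mul_comm]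
      exact_mod_cast h1
    have hcval : c = ⟪v₂, w₂⟫_ℂ / (d : ℂ) := by
      field_simp at htrace ⊢
      linear_combination htrace
    rw [hfF, hc, hcval, ← inner_conj_symm v₂ w₂]
    field_simp
end

section
/- Let G be a locally compact group with a bi-invariant mean m, and let (π, V) be an infinite-dimensional irreducible unitary representation of G. Then for the constant c_π characterized by m(|⟨π(g)v₁, v₂⟩|²) = c_π·‖v₁‖²·‖v₂‖², one has c_π = 0. -/
open scoped InnerProductSpace BoundedContinuousFunction

/-- For an infinite-dimensional irreducible unitary representation `π` of a locally
compact group `G` with a bi-invariant mean `m`, the constant `c_π` with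
`m(|⟨π(g)v₁, v₂⟩|²) = c_π ‖v₁‖² ‖v₂‖²` must vanish. -/
theorem mean_constant_zero_of_infinite_dim
    {G : Type*} [Group G] [TopologicalSpace G] [IsTopologicalGroup G]
    [LocallyCompactSpace G]
    (m : (G →ᵇ ℂ) →ₗ[ℂ] ℂ)
    (hm_one : m 1 = 1)
    (hm_pos : ∀ f : G →ᵇ ℂ, (∀ g, 0 ≤ (f g).re ∧ (f g).im = 0) →
      0 ≤ (m f).re ∧ (m f).im = 0)
    (hm_left : ∀ (f f' : G →ᵇ ℂ) (h : G), (∀ g, f' g = f (h * g)) → m f' = m f)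
    (hm_right : ∀ (f f' : G →ᵇ ℂ) (h : G), (∀ g, f' g = f (g * h)) → m f' = m f)
    {V : Type*} [NormedAddCommGroup V] [InnerProductSpace ℂ V] [CompleteSpace V]
    (hinf : ¬ FiniteDimensional ℂ V)
    (π : G →* (V ≃ₗᵢ[ℂ] V))
    (hcont : ∀ v w : V, Continuous fun g => (⟪w, (π g) v⟫_ℂ))
    (hirr : ∀ U : Submodule ℂ V, IsClosed (U : Set V) →
      (∀ g, ∀ v ∈ U, (π g) v ∈ U) → U = ⊥ ∨ U = ⊤)
    (c : ℂ)
    (hc : ∀ (v₁ v₂ : V) (f : G →ᵇ ℂ),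
      (∀ g, f g = (‖(⟪v₂, (π g) v₁⟫_ℂ)‖ ^ 2 : ℝ)) →
      m f = c * (‖v₁‖ ^ 2 : ℝ) * (‖v₂‖ ^ 2 : ℝ)) :
    c = 0 := by
  classical
  -- orthonormal families of arbitrary size
  have hexists : ∀ k : ℕ, ∃ e : Fin k → V, Orthonormal ℂ e := by
    intro k
    obtain ⟨w, b, hb⟩ := exists_hilbertBasis ℂ V
    have hw : w.Infinite := by
      by_contra hfin
      rw [Set.not_infinite] at hfin
      apply hinf
      have htop : (Submodule.span ℂ (Set.range b)).topologicalClosure = ⊤ := b.dense_span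
      rw [hb, Subtype.range_coe] at htop
      have hfd : FiniteDimensional ℂ (Submodule.span ℂ w) := .span_of_finite ℂ hfin
      have hclosed : IsClosed ((Submodule.span ℂ w : Submodule ℂ V) : Set V) :=
        Submodule.closed_of_finiteDimensional _
      rw [IsClosed.submodule_topologicalClosure_eq hclosed] at htop
      exact Module.finite_def.mpr (htop ▸ Submodule.fg_span hfin)
    have : Infinite w := hw.to_subtype
    exact ⟨b ∘ (Fin.valEmbedding.trans (Infinite.natEmbedding w)),
      b.orthonormal.comp _ (Fin.valEmbedding.trans (Infinite.natEmbedding w)).injective⟩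
  -- bounded continuous matrix-coefficient-square functions
  have mkF : ∀ v x : V, ∃ f : G →ᵇ ℂ, ∀ g, f g = ((‖(⟪x, (π g) v⟫_ℂ)‖ ^ 2 : ℝ) : ℂ) := by
    intro v x
    refine ⟨BoundedContinuousFunction.ofNormedAddCommGroup
      (fun g => ((‖(⟪x, (π g) v⟫_ℂ)‖ ^ 2 : ℝ) : ℂ))
      (Complex.continuous_ofReal.comp ((hcont v x).norm.pow 2))
      ((‖x‖ * ‖v‖) ^ 2) ?_, fun g => rfl⟩
    intro g
    rw [Complex.norm_real, Real.norm_eq_abs, abs_of_nonneg (by positivity)]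
    have h1 : ‖(⟪x, (π g) v⟫_ℂ)‖ ≤ ‖x‖ * ‖(π g) v‖ := norm_inner_le_norm x _
    rw [(π g).norm_map] at h1
    exact pow_le_pow_left₀ (norm_nonneg _) h1 2
  obtain ⟨v, hv⟩ := hexists 1
  have hv1 : ‖v 0‖ = 1 := hv.1 0
  -- c is real and nonnegative
  obtain ⟨f0, hf0⟩ := mkF (v 0) (v 0)
  have hmc : m f0 = c := by
    have := hc (v 0) (v 0) f0 hf0
    rw [hv1] at this; simpa using this
  have hcpos : 0 ≤ c.re ∧ c.im = 0 := by
    rw [← hmc]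
    exact hm_pos f0 (fun g => by
      rw [hf0 g]; exact ⟨by rw [Complex.ofReal_re]; positivity, Complex.ofReal_im _⟩)
  -- for each k, k * c.re ≤ 1
  have key : ∀ k : ℕ, (k : ℝ) * c.re ≤ 1 := by
    intro k
    obtain ⟨e, he⟩ := hexists k
    choose F hF using fun i : Fin k => mkF (v 0) (e i)
    have hmF : ∀ i, m (F i) = c := by
      intro i
      have := hc (v 0) (e i) (F i) (hF i)
      rw [hv1, he.1 i] at this; simpa using this
    have hpos := hm_pos (1 - ∑ i, F i) ?_
    · have hmsum : m (1 - ∑ i, F i) = 1 - (k : ℂ) * c := by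
        rw [map_sub, map_sum, hm_one]
        simp [hmF, Finset.sum_const]
      rw [hmsum] at hpos
      have := hpos.1
      simp only [Complex.sub_re, Complex.one_re, Complex.mul_re, Complex.natCast_re,
        Complex.natCast_im, hcpos.2, mul_zero, zero_mul, sub_zero] at this
      linarith
    · intro g
      have happ : ((1 - ∑ i, F i : G →ᵇ ℂ)) g = 1 - ∑ i, ((‖(⟪e i, (π g) (v 0)⟫_ℂ)‖ ^ 2 : ℝ) : ℂ) := by
        simp [hF]
      have hcast : (1 : ℂ) - ∑ i, ((‖(⟪e i, (π g) (v 0)⟫_ℂ)‖ ^ 2 : ℝ) : ℂ)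
          = ((1 - ∑ i, ‖(⟪e i, (π g) (v 0)⟫_ℂ)‖ ^ 2 : ℝ) : ℂ) := by push_cast; ring
      rw [happ, hcast]
      refine ⟨?_, Complex.ofReal_im _⟩
      rw [Complex.ofReal_re]
      have hb := he.sum_inner_products_le ((π g) (v 0)) (s := Finset.univ)
      rw [(π g).norm_map, hv1] at hb
      simpa using sub_nonneg.mpr (le_trans hb (by norm_num))
  -- conclude
  have hre : c.re = 0 := by
    by_contra h
    have hpos' : 0 < c.re := lt_of_le_of_ne hcpos.1 (Ne.symm h)
    obtain ⟨k, hk⟩ := exists_nat_gt (1 / c.re)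
    have := key k
    rw [div_lt_iff₀ hpos'] at hk
    linarith
  exact Complex.ext hre hcpos.2
end

section
/- Let K be a non-archimedean local field, and in the Heisenberg group H_n(K) let F_m = B(r_m) × B(r_m) × B(r_m²) where B(r) is the closed ball of radius r about 0 (sup norm on K^n) and r_m → ∞. Then for every compact set C ⊂ H_n(K) there exists M such that for all m ≥ M and all g₁, g₂ ∈ C, g₂⁻¹·F_m·g₁ = F_m. -/
open Matrix Filter

/-- Multiplication of the Heisenberg group `H_n(K) = K^n × K^n × K`. -/
def heisMul {K : Type*} [Field K] {n : ℕ}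
    (g h : (Fin n → K) × (Fin n → K) × K) : (Fin n → K) × (Fin n → K) × K :=
  (g.1 + h.1, g.2.1 + h.2.1, g.2.2 + h.2.2 + g.1 ⬝ᵥ h.2.1)

/-- Inversion in the Heisenberg group. -/
def heisInv {K : Type*} [Field K] {n : ℕ}
    (g : (Fin n → K) × (Fin n → K) × K) : (Fin n → K) × (Fin n → K) × K :=
  (-g.1, -g.2.1, -g.2.2 + g.1 ⬝ᵥ g.2.1)

lemma nonarch_sum {K : Type*} [NontriviallyNormedField K]
    (hna : IsNonarchimedean (norm : K → ℝ)) {ι : Type*} (s : Finset ι) (f : ι → K)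
    (c : ℝ) (hc : 0 ≤ c) (h : ∀ i ∈ s, ‖f i‖ ≤ c) : ‖∑ i ∈ s, f i‖ ≤ c := by
  induction s using Finset.cons_induction with
  | empty => simpa using hc
  | cons i s hi ih =>
    rw [Finset.sum_cons]
    exact le_trans (hna _ _) (max_le (h i (Finset.mem_cons_self i s))
      (ih fun j hj => h j (Finset.mem_cons_of_mem hj)))

lemma nonarch_pi {K : Type*} [NontriviallyNormedField K]
    (hna : IsNonarchimedean (norm : K → ℝ)) {n : ℕ} (x y : Fin n → K) :
    ‖x + y‖ ≤ max ‖x‖ ‖y‖ := by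
  apply pi_norm_le_iff_of_nonneg (le_max_iff.2 (Or.inl (norm_nonneg _))) |>.2
  intro i
  exact le_trans (hna (x i) (y i))
    (max_le_max (norm_le_pi_norm x i) (norm_le_pi_norm y i))

lemma nonarch_dot {K : Type*} [NontriviallyNormedField K]
    (hna : IsNonarchimedean (norm : K → ℝ)) {n : ℕ} (x y : Fin n → K) :
    ‖x ⬝ᵥ y‖ ≤ ‖x‖ * ‖y‖ := by
  apply nonarch_sum hna _ _ _ (mul_nonneg (norm_nonneg _) (norm_nonneg _))
  intro i _
  rw [norm_mul]
  exact mul_le_mul (norm_le_pi_norm x i) (norm_le_pi_norm y i) (norm_nonneg _)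
    (norm_nonneg _)

/-- key bound: if `a, b` have coordinates bounded by `k, k, k²` and `p ∈ F`, then
`a * p * b ∈ F`, provided `1 ≤ k ≤ R`. -/
lemma heis_key {K : Type*} [NontriviallyNormedField K]
    (hna : IsNonarchimedean (norm : K → ℝ)) {n : ℕ}
    (a b p : (Fin n → K) × (Fin n → K) × K) (k R : ℝ) (hk : 1 ≤ k) (hkR : k ≤ R)
    (ha1 : ‖a.1‖ ≤ k) (ha2 : ‖a.2.1‖ ≤ k) (ha3 : ‖a.2.2‖ ≤ k ^ 2)
    (hb1 : ‖b.1‖ ≤ k) (hb2 : ‖b.2.1‖ ≤ k) (hb3 : ‖b.2.2‖ ≤ k ^ 2)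
    (hp1 : ‖p.1‖ ≤ R) (hp2 : ‖p.2.1‖ ≤ R) (hp3 : ‖p.2.2‖ ≤ R ^ 2) :
    ‖(heisMul (heisMul a p) b).1‖ ≤ R ∧ ‖(heisMul (heisMul a p) b).2.1‖ ≤ R ∧
      ‖(heisMul (heisMul a p) b).2.2‖ ≤ R ^ 2 := by
  have h0 : (0:ℝ) ≤ k := le_trans zero_le_one hk
  have hR1 : (1:ℝ) ≤ R := le_trans hk hkR
  have h0R : (0:ℝ) ≤ R := le_trans zero_le_one hR1
  have hk2 : k ^ 2 ≤ R ^ 2 := by nlinarith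
  have hRR2 : R ≤ R ^ 2 := by nlinarith
  refine ⟨?_, ?_, ?_⟩
  · exact le_trans (nonarch_pi hna _ _) (max_le
      (le_trans (nonarch_pi hna _ _) (max_le (le_trans ha1 hkR) hp1)) (le_trans hb1 hkR))
  · exact le_trans (nonarch_pi hna _ _) (max_le
      (le_trans (nonarch_pi hna _ _) (max_le (le_trans ha2 hkR) hp2)) (le_trans hb2 hkR))
  · show ‖a.2.2 + p.2.2 + a.1 ⬝ᵥ p.2.1 + b.2.2 + (a.1 + p.1) ⬝ᵥ b.2.1‖ ≤ R ^ 2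
    refine le_trans (hna _ _) (max_le (le_trans (hna _ _) (max_le (le_trans (hna _ _)
      (max_le (le_trans (hna _ _) (max_le (le_trans ha3 hk2) hp3)) ?_))
      (le_trans hb3 hk2))) ?_)
    · exact le_trans (nonarch_dot hna _ _)
        (le_trans (mul_le_mul ha1 hp2 (norm_nonneg _) h0) (by nlinarith))
    · refine le_trans (nonarch_dot hna _ _) ?_
      have h := le_trans (nonarch_pi hna a.1 p.1) (max_le (le_trans ha1 hkR) hp1)
      exact le_trans (mul_le_mul h (le_trans hb2 hkR) (norm_nonneg _) h0R) (by nlinarith)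

lemma heis_id1 {K : Type*} [Field K] {n : ℕ}
    (g₁ g₂ p : (Fin n → K) × (Fin n → K) × K) :
    heisMul (heisMul (heisInv g₂) (heisMul (heisMul g₂ p) (heisInv g₁))) g₁ = p := by
  simp only [heisMul, heisInv, Prod.ext_iff]
  refine ⟨by abel, by abel, ?_⟩
  simp only [add_dotProduct, dotProduct_add, neg_dotProduct, dotProduct_neg]
  ring

lemma heis_id2 {K : Type*} [Field K] {n : ℕ}
    (g₁ g₂ p : (Fin n → K) × (Fin n → K) × K) :
    heisMul (heisMul g₂ (heisMul (heisMul (heisInv g₂) p) g₁)) (heisInv g₁) = p := by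
  simp only [heisMul, heisInv, Prod.ext_iff]
  refine ⟨by abel, by abel, ?_⟩
  simp only [add_dotProduct, dotProduct_add, neg_dotProduct, dotProduct_neg]
  ring

/-- Over a nonarchimedean local field, for the Følner sets
`F_m = B(r_m) × B(r_m) × B(r_m²)` (sup-norm balls) with `r_m → ∞`, and any compact
`C ⊆ H_n(K)`, eventually `g₂⁻¹ F_m g₁ = F_m` for all `g₁, g₂ ∈ C`. -/
theorem nonarch_folner_eventually_equal
    {K : Type*} [NontriviallyNormedField K] [LocallyCompactSpace K]
    (hna : IsNonarchimedean (norm : K → ℝ)) {n : ℕ}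
    (r : ℕ → ℝ) (hr : Tendsto r atTop atTop)
    (F : ℕ → Set ((Fin n → K) × (Fin n → K) × K))
    (hF : ∀ m, F m = {p | ‖p.1‖ ≤ r m ∧ ‖p.2.1‖ ≤ r m ∧ ‖p.2.2‖ ≤ (r m) ^ 2})
    (C : Set ((Fin n → K) × (Fin n → K) × K)) (hC : IsCompact C) :
    ∃ M : ℕ, ∀ m ≥ M, ∀ g₁ ∈ C, ∀ g₂ ∈ C,
      (fun p => heisMul (heisMul (heisInv g₂) p) g₁) '' F m = F m := by
  obtain ⟨k₀, hk₀⟩ := hC.isBounded.exists_norm_le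
  set k : ℝ := max k₀ 1 with hkdef
  have hk1 : (1:ℝ) ≤ k := le_max_right _ _
  have hk0 : (0:ℝ) ≤ k := le_trans zero_le_one hk1
  have hbnd : ∀ g ∈ C, ‖g.1‖ ≤ k ∧ ‖g.2.1‖ ≤ k ∧ ‖g.2.2‖ ≤ k := by
    intro g hg
    have h := le_trans (hk₀ g hg) (le_max_left k₀ 1)
    exact ⟨le_trans (norm_fst_le g) h,
      le_trans (le_trans (norm_fst_le g.2) (norm_snd_le g)) h,
      le_trans (le_trans (norm_snd_le g.2) (norm_snd_le g)) h⟩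
  have hcoords : ∀ g ∈ C, ∀ a ∈ ({g, heisInv g} : Set _),
      ‖a.1‖ ≤ k ∧ ‖a.2.1‖ ≤ k ∧ ‖a.2.2‖ ≤ k ^ 2 := by
    intro g hg a ha
    obtain ⟨h1, h2, h3⟩ := hbnd g hg
    have hkk2 : k ≤ k ^ 2 := by nlinarith
    rcases ha with rfl | ha
    · exact ⟨h1, h2, le_trans h3 hkk2⟩
    · rcases ha with rfl
      refine ⟨by simpa [heisInv] using h1, by simpa [heisInv] using h2, ?_⟩
      show ‖-g.2.2 + g.1 ⬝ᵥ g.2.1‖ ≤ k ^ 2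
      refine le_trans (hna _ _) (max_le ?_ ?_)
      · rw [norm_neg]; exact le_trans h3 hkk2
      · exact le_trans (nonarch_dot hna _ _)
          (le_trans (mul_le_mul h1 h2 (norm_nonneg _) hk0) (by nlinarith))
  obtain ⟨M, hM⟩ := (hr.eventually_ge_atTop k).exists_forall_of_atTop
  refine ⟨M, fun m hm g₁ hg₁ g₂ hg₂ => ?_⟩
  have hkR : k ≤ r m := hM m hm
  have hmem : ∀ p, p ∈ F m ↔ ‖p.1‖ ≤ r m ∧ ‖p.2.1‖ ≤ r m ∧ ‖p.2.2‖ ≤ (r m) ^ 2 := by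
    intro p; rw [hF m]; rfl
  apply Set.eq_of_subset_of_subset
  · rintro q ⟨p, hp, rfl⟩
    obtain ⟨hp1, hp2, hp3⟩ := (hmem p).1 hp
    obtain ⟨a1, a2, a3⟩ := hcoords g₂ hg₂ (heisInv g₂) (by simp)
    obtain ⟨b1, b2, b3⟩ := hcoords g₁ hg₁ g₁ (by simp)
    exact (hmem _).2 (heis_key hna _ _ _ k (r m) hk1 hkR a1 a2 a3 b1 b2 b3 hp1 hp2 hp3)
  · intro p hp
    refine ⟨heisMul (heisMul g₂ p) (heisInv g₁), ?_, heis_id1 g₁ g₂ p⟩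
    obtain ⟨hp1, hp2, hp3⟩ := (hmem p).1 hp
    obtain ⟨a1, a2, a3⟩ := hcoords g₂ hg₂ g₂ (by simp)
    obtain ⟨b1, b2, b3⟩ := hcoords g₁ hg₁ (heisInv g₁) (by simp)
    exact (hmem _).2 (heis_key hna _ _ _ k (r m) hk1 hkR a1 a2 a3 b1 b2 b3 hp1 hp2 hp3)
end
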